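/- arXiv:1912.12307 — 13 statements merged into one kernel-verified Lean document; each statement's English description precedes it below -/
import Mathlib

section
/- Let T and S be symmetric linear operators on E with V := T − S positive semidefinite. Let E0, E1, ε0, ε1 be real numbers and ψ, χ unit vectors in E such that: (i) T ψ = E0 • ψ and re⟪v, T v⟫ ≥ E0·‖v‖² for all v ∈ E (ψ is a ground state of T with ground energy E0); (ii) E1 is the least element of the set {re⟪v, T v⟫ : ‖v‖ = 1 and ⟪ψ, v⟫ = 0}, and E1 > E0 (the gap of T is positive); (iii) S χ = ε0 • χ and re⟪v, S v⟫ ≥ ε0·‖v‖² for all v ∈ E; (iv) re⟪v, S v⟫ ≥ ε1 for every unit vector v with ⟪χ, v⟫ = 0, and ε1 > ε0 (the gap of S is positive). Then ‖⟪χ, ψ⟫‖² ≥ 1 − re⟪χ, V χ⟫ / (ε1 − ε0). -/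
open scoped InnerProductSpace

/-- Claim 1: lower bound on the overlap of the ground state `ψ` of the perturbed
Hamiltonian `T = S + V` with the ground state `χ` of `S`, in terms of the
expectation of the positive perturbation `V = T - S` in `χ` and the gap
`ε1 - ε0` of `S`. -/
theorem claim1
    {E : Type*} [NormedAddCommGroup E] [InnerProductSpace ℂ E]
    [FiniteDimensional ℂ E] [Nontrivial E]
    (T S : E →ₗ[ℂ] E) (hT : T.IsSymmetric) (hS : S.IsSymmetric)
    (hV : ∀ v : E, 0 ≤ (⟪v, (T - S) v⟫_ℂ).re)
    (E0 E1 ε0 ε1 : ℝ) (ψ χ : E) (hψ : ‖ψ‖ = 1) (hχ : ‖χ‖ = 1)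
    (hTψ : T ψ = (E0 : ℂ) • ψ)
    (hTgr : ∀ v : E, E0 * ‖v‖ ^ 2 ≤ (⟪v, T v⟫_ℂ).re)
    (hE1 : IsLeast {r : ℝ | ∃ v : E, ‖v‖ = 1 ∧ ⟪ψ, v⟫_ℂ = 0 ∧ r = (⟪v, T v⟫_ℂ).re} E1)
    (hgapT : E0 < E1)
    (hSχ : S χ = (ε0 : ℂ) • χ)
    (hSgr : ∀ v : E, ε0 * ‖v‖ ^ 2 ≤ (⟪v, S v⟫_ℂ).re)
    (hSgap : ∀ v : E, ‖v‖ = 1 → ⟪χ, v⟫_ℂ = 0 → ε1 ≤ (⟪v, S v⟫_ℂ).re)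
    (hgapS : ε0 < ε1) :
    1 - (⟪χ, (T - S) χ⟫_ℂ).re / (ε1 - ε0) ≤ ‖⟪χ, ψ⟫_ℂ‖ ^ 2 := by
  set p := ⟪χ, ψ⟫_ℂ with hp
  set w := ψ - p • χ with hwdef
  have hχχ : ⟪χ, χ⟫_ℂ = 1 := by
    rw [inner_self_eq_norm_sq_to_K, hχ]; norm_num
  have hχw : ⟪χ, w⟫_ℂ = 0 := by
    simp [hwdef, inner_sub_right, inner_smul_right, hχχ, hχ, ← hp]
  have hwχ : ⟪w, χ⟫_ℂ = 0 := by
    rw [← inner_conj_symm, hχw, map_zero]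
  have hψeq : ψ = p • χ + w := by simp [hwdef]
  -- norm decomposition
  have hpcw : ⟪p • χ, w⟫_ℂ = 0 := by rw [inner_smul_left, hχw, mul_zero]
  have hnorm : ‖p‖ ^ 2 + ‖w‖ ^ 2 = 1 := by
    have h := norm_add_sq (𝕜 := ℂ) (p • χ) w
    rw [hpcw] at h
    simp only [map_zero, mul_zero, add_zero] at h
    have : ‖p • χ‖ = ‖p‖ := by rw [norm_smul, hχ, mul_one]
    rw [this] at h
    rw [← hψeq] at h
    rw [hψ] at h
    simpa using h.symm
  -- inner products with S
  have hχSw : ⟪χ, S w⟫_ℂ = 0 := by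
    rw [← hS χ w, hSχ, inner_smul_left, hχw, mul_zero]
  have hwSχ : ⟪w, S χ⟫_ℂ = 0 := by
    rw [hSχ, inner_smul_right, hwχ, mul_zero]
  have hSψ : (⟪ψ, S ψ⟫_ℂ).re = ε0 * ‖p‖ ^ 2 + (⟪w, S w⟫_ℂ).re := by
    have hexp : S (p • χ + w) = p • ((ε0 : ℂ) • χ) + S w := by
      rw [map_add, map_smul, hSχ]
    rw [hψeq, hexp]
    simp only [inner_add_left, inner_add_right, inner_smul_left, inner_smul_right,
      hχχ, hχSw, hwSχ, hwχ, mul_zero, zero_add, add_zero, mul_one]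
    have hcp : (starRingEnd ℂ) p * (p * (ε0 : ℂ)) = ((ε0 * ‖p‖ ^ 2 : ℝ) : ℂ) := by
      rw [show (starRingEnd ℂ) p * (p * (ε0 : ℂ)) = ((starRingEnd ℂ) p * p) * (ε0 : ℂ) by ring,
        Complex.conj_mul']
      push_cast
      ring
    rw [show p * ((ε0 : ℂ) * (starRingEnd ℂ) p) = (starRingEnd ℂ) p * (p * (ε0 : ℂ)) by ring,
      hcp, Complex.add_re, Complex.ofReal_re]
  -- gap inequality for w
  have hgapw : ε1 * ‖w‖ ^ 2 ≤ (⟪w, S w⟫_ℂ).re := by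
    rcases eq_or_ne w 0 with h0 | h0
    · simp [h0]
    · have hwpos : (0 : ℝ) < ‖w‖ := norm_pos_iff.mpr h0
      set u := ((‖w‖ : ℂ))⁻¹ • w with hu
      have hun : ‖u‖ = 1 := by
        rw [hu, norm_smul, norm_inv, Complex.norm_real, Real.norm_eq_abs,
            abs_of_pos hwpos, inv_mul_cancel₀ (ne_of_gt hwpos)]
      have hχu : ⟪χ, u⟫_ℂ = 0 := by
        rw [hu, inner_smul_right, hχw, mul_zero]
      have hineq := hSgap u hun hχu
      have huSu : (⟪u, S u⟫_ℂ).re = (‖w‖ ^ 2)⁻¹ * (⟪w, S w⟫_ℂ).re := by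
        have hval : ⟪u, S u⟫_ℂ = (((‖w‖ ^ 2)⁻¹ : ℝ) : ℂ) * ⟪w, S w⟫_ℂ := by
          rw [hu, map_smul, inner_smul_left, inner_smul_right]
          have hc : (starRingEnd ℂ) ((‖w‖ : ℂ))⁻¹ = ((‖w‖ : ℂ))⁻¹ := by
            rw [← Complex.ofReal_inv, Complex.conj_ofReal]
          rw [hc]
          push_cast
          ring
        rw [hval, Complex.re_ofReal_mul]
      rw [huSu] at hineq
      have hw2pos : (0 : ℝ) < ‖w‖ ^ 2 := pow_pos hwpos 2
      have := mul_le_mul_of_nonneg_left hineq hw2pos.le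
      calc ε1 * ‖w‖ ^ 2 = ‖w‖ ^ 2 * ε1 := by ring
        _ ≤ ‖w‖ ^ 2 * ((‖w‖ ^ 2)⁻¹ * (⟪w, S w⟫_ℂ).re) := this
        _ = (⟪w, S w⟫_ℂ).re := by
            field_simp
  -- re⟪ψ, S ψ⟫ ≤ E0
  have hψT : (⟪ψ, T ψ⟫_ℂ).re = E0 := by
    rw [hTψ, inner_smul_right]
    have : ⟪ψ, ψ⟫_ℂ = 1 := by rw [inner_self_eq_norm_sq_to_K, hψ]; norm_num
    rw [this, mul_one]
    simp
  have h1 : (⟪ψ, S ψ⟫_ℂ).re ≤ E0 := by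
    have := hV ψ
    rw [LinearMap.sub_apply, inner_sub_right] at this
    simp only [Complex.sub_re] at this
    linarith [this, hψT.le]
  -- E0 ≤ ε0 + re⟪χ, V χ⟫
  have hχS : (⟪χ, S χ⟫_ℂ).re = ε0 := by
    rw [hSχ, inner_smul_right, hχχ, mul_one]; simp
  have h2 : E0 ≤ ε0 + (⟪χ, (T - S) χ⟫_ℂ).re := by
    have := hTgr χ
    rw [hχ] at this
    have hsplit : (⟪χ, T χ⟫_ℂ).re = (⟪χ, S χ⟫_ℂ).re + (⟪χ, (T - S) χ⟫_ℂ).re := by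
      rw [LinearMap.sub_apply, inner_sub_right]
      simp [Complex.sub_re]
    rw [hsplit, hχS] at this
    linarith
  -- combine
  have hkey : (ε1 - ε0) * (1 - ‖p‖ ^ 2) ≤ (⟪χ, (T - S) χ⟫_ℂ).re := by
    have hw2 : ‖w‖ ^ 2 = 1 - ‖p‖ ^ 2 := by linarith
    have hexp : (ε1 - ε0) * (1 - ‖p‖ ^ 2) = ε0 * ‖p‖ ^ 2 + ε1 * ‖w‖ ^ 2 - ε0 := by
      rw [hw2]; ring
    linarith [hSψ, hgapw, h1, h2]
  have hg : (0 : ℝ) < ε1 - ε0 := by linarith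
  rw [sub_le_comm, le_div_iff₀ hg, mul_comm]
  exact hkey
end

section
/- Let T be a symmetric linear operator on E, let E0, E1 be real numbers, and let ψ be a unit vector with T ψ = E0 • ψ. Suppose re⟪v, T v⟫ ≥ E1 for every unit vector v with ⟪ψ, v⟫ = 0. Then for every unit vector χ, re⟪χ, T χ⟫ ≥ E1 − (E1 − E0)·‖⟪ψ, χ⟫‖². -/
open scoped InnerProductSpace

/-- Key intermediate inequality of Claim 1: if `ψ` is a unit eigenvector of the
symmetric operator `T` with eigenvalue `E0`, and the expectation of `T` is at
least `E1` on unit vectors orthogonal to `ψ`, then for every unit vector `χ`,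
`re⟪χ, T χ⟫ ≥ E1 − (E1 − E0)·‖⟪ψ, χ⟫‖²`. -/
theorem claim1_key_inequality
    {E : Type*} [NormedAddCommGroup E] [InnerProductSpace ℂ E]
    [FiniteDimensional ℂ E] [Nontrivial E]
    (T : E →ₗ[ℂ] E) (hT : T.IsSymmetric)
    (E0 E1 : ℝ) (ψ : E) (hψ : ‖ψ‖ = 1)
    (hTψ : T ψ = (E0 : ℂ) • ψ)
    (hgap : ∀ v : E, ‖v‖ = 1 → ⟪ψ, v⟫_ℂ = 0 → E1 ≤ (⟪v, T v⟫_ℂ).re) :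
    ∀ χ : E, ‖χ‖ = 1 →
      E1 - (E1 - E0) * ‖⟪ψ, χ⟫_ℂ‖ ^ 2 ≤ (⟪χ, T χ⟫_ℂ).re := by
  intro χ hχ
  set a : ℂ := ⟪ψ, χ⟫_ℂ with ha
  set w : E := χ - a • ψ with hw
  have hψψ : ⟪ψ, ψ⟫_ℂ = 1 := by
    rw [inner_self_eq_norm_sq_to_K, hψ]; norm_num
  have hχχ : ⟪χ, χ⟫_ℂ = 1 := by
    rw [inner_self_eq_norm_sq_to_K, hχ]; norm_num
  have hψw : ⟪ψ, w⟫_ℂ = 0 := by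
    simp [hw, inner_sub_right, inner_smul_right, hψψ, ha, hψ]
  have hwψ : ⟪w, ψ⟫_ℂ = 0 := by
    rw [← inner_conj_symm, hψw, map_zero]
  have hχψ : ⟪χ, ψ⟫_ℂ = starRingEnd ℂ a := by
    rw [ha, inner_conj_symm]
  have hww : ⟪w, w⟫_ℂ = 1 - starRingEnd ℂ a * a := by
    simp only [hw, inner_sub_left, inner_sub_right, inner_smul_left,
      inner_smul_right, hψψ, hχχ, hχψ, ← ha]
    ring
  have hcc : (starRingEnd ℂ a * a : ℂ) = ((‖a‖ ^ 2 : ℝ) : ℂ) := by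
    rw [mul_comm, Complex.mul_conj, Complex.normSq_eq_norm_sq]
  have hnw : (‖w‖ : ℝ) ^ 2 = 1 - ‖a‖ ^ 2 := by
    have h1 : ⟪w, w⟫_ℂ = ((1 - ‖a‖ ^ 2 : ℝ) : ℂ) := by
      rw [hww, hcc]; push_cast; ring
    have h2 := inner_self_eq_norm_sq_to_K (𝕜 := ℂ) w
    rw [h1] at h2
    have h3 : ((1 - ‖a‖ ^ 2 : ℝ) : ℂ) = ((‖w‖ ^ 2 : ℝ) : ℂ) := by
      rw [h2]; norm_cast
    exact_mod_cast h3.symm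
  -- inner products with Tψ and Tw
  have hψTw : ⟪ψ, T w⟫_ℂ = 0 := by
    rw [← hT ψ w, hTψ, inner_smul_left, hψw, mul_zero]
  have hwTψ : ⟪w, T ψ⟫_ℂ = 0 := by
    rw [hTψ, inner_smul_right, hwψ, mul_zero]
  have hχeq : χ = a • ψ + w := by rw [hw]; abel
  have hkey : ⟪χ, T χ⟫_ℂ = ((E0 * ‖a‖ ^ 2 : ℝ) : ℂ) + ⟪w, T w⟫_ℂ := by
    conv_lhs => rw [hχeq]
    rw [map_add, map_smul]
    simp only [inner_add_left, inner_add_right, inner_smul_left,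
      inner_smul_right, hψTw, hwTψ, hTψ, hψψ, hwψ, hψw, mul_zero, zero_add,
      add_zero, mul_one]
    rw [Complex.ofReal_mul, ← hcc]
    ring
  have hre : (⟪χ, T χ⟫_ℂ).re = E0 * ‖a‖ ^ 2 + (⟪w, T w⟫_ℂ).re := by
    rw [hkey, Complex.add_re, Complex.ofReal_re]
  have hbound : E1 * ‖w‖ ^ 2 ≤ (⟪w, T w⟫_ℂ).re := by
    rcases eq_or_ne w 0 with h | h
    · simp [h]
    · have hn : ‖w‖ ≠ 0 := norm_ne_zero_iff.mpr h
      have hnpos : (0 : ℝ) < ‖w‖ := norm_pos_iff.mpr h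
      set c : ℂ := ((‖w‖⁻¹ : ℝ) : ℂ) with hc
      have hunit : ‖c • w‖ = 1 := by
        rw [norm_smul, hc, Complex.norm_real]
        simp [abs_of_pos (inv_pos.mpr hnpos), inv_mul_cancel₀ hn]
      have horth : ⟪ψ, c • w⟫_ℂ = 0 := by
        rw [inner_smul_right, hψw, mul_zero]
      have hg := hgap _ hunit horth
      have hv : ⟪c • w, T (c • w)⟫_ℂ
          = ((‖w‖⁻¹ ^ 2 : ℝ) : ℂ) * ⟪w, T w⟫_ℂ := by
        rw [map_smul, inner_smul_left, inner_smul_right, hc, Complex.conj_ofReal]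
        push_cast; ring
      rw [hv] at hg
      have hg' : E1 ≤ ‖w‖⁻¹ ^ 2 * (⟪w, T w⟫_ℂ).re := by
        rwa [Complex.re_ofReal_mul] at hg
      have h2 : E1 * ‖w‖ ^ 2 ≤ ‖w‖⁻¹ ^ 2 * (⟪w, T w⟫_ℂ).re * ‖w‖ ^ 2 := by
        nlinarith [sq_nonneg ‖w‖]
      calc E1 * ‖w‖ ^ 2 ≤ ‖w‖⁻¹ ^ 2 * (⟪w, T w⟫_ℂ).re * ‖w‖ ^ 2 := h2
        _ = (⟪w, T w⟫_ℂ).re := by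
            field_simp
  have hna : ‖⟪ψ, χ⟫_ℂ‖ = ‖a‖ := by rw [ha]
  have h3 : E1 * (1 - ‖a‖ ^ 2) ≤ (⟪w, T w⟫_ℂ).re := hnw ▸ hbound
  rw [hna, hre]
  nlinarith [h3]
end

section
/- Let T and S be symmetric linear operators on E with V := T − S positive semidefinite. Let E0, E1, ε0, ε1, V_U be real numbers and ψ, χ unit vectors in E such that: (i) T ψ = E0 • ψ and re⟪v, T v⟫ ≥ E0·‖v‖² for all v; (ii) E1 is the least element of the set {re⟪v, T v⟫ : ‖v‖ = 1 and ⟪ψ, v⟫ = 0}, and E1 > E0; (iii) S χ = ε0 • χ and re⟪v, S v⟫ ≥ ε0·‖v‖² for all v; (iv) re⟪v, S v⟫ ≥ ε1 for every unit vector v with ⟪χ, v⟫ = 0, and ε1 > ε0; (v) re⟪χ, V χ⟫ ≤ V_U. Then ‖⟪χ, ψ⟫‖² ≥ 1 − V_U / (ε1 − ε0). -/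
open scoped InnerProductSpace

/-- Claim 2: the overlap bound of Claim 1 with the exact expectation
`⟪χ, V χ⟫` of the positive perturbation `V = T - S` replaced by any upper
bound `V_U` for it. -/
theorem claim2
    {E : Type*} [NormedAddCommGroup E] [InnerProductSpace ℂ E]
    [FiniteDimensional ℂ E] [Nontrivial E]
    (T S : E →ₗ[ℂ] E) (hT : T.IsSymmetric) (hS : S.IsSymmetric)
    (hV : ∀ v : E, 0 ≤ (⟪v, (T - S) v⟫_ℂ).re)
    (E0 E1 ε0 ε1 VU : ℝ) (ψ χ : E) (hψ : ‖ψ‖ = 1) (hχ : ‖χ‖ = 1)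
    (hTψ : T ψ = (E0 : ℂ) • ψ)
    (hTgr : ∀ v : E, E0 * ‖v‖ ^ 2 ≤ (⟪v, T v⟫_ℂ).re)
    (hE1 : IsLeast {r : ℝ | ∃ v : E, ‖v‖ = 1 ∧ ⟪ψ, v⟫_ℂ = 0 ∧ r = (⟪v, T v⟫_ℂ).re} E1)
    (hgapT : E0 < E1)
    (hSχ : S χ = (ε0 : ℂ) • χ)
    (hSgr : ∀ v : E, ε0 * ‖v‖ ^ 2 ≤ (⟪v, S v⟫_ℂ).re)
    (hSgap : ∀ v : E, ‖v‖ = 1 → ⟪χ, v⟫_ℂ = 0 → ε1 ≤ (⟪v, S v⟫_ℂ).re)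
    (hgapS : ε0 < ε1)
    (hVU : (⟪χ, (T - S) χ⟫_ℂ).re ≤ VU) :
    1 - VU / (ε1 - ε0) ≤ ‖⟪χ, ψ⟫_ℂ‖ ^ 2 := by
  set p := ⟪χ, ψ⟫_ℂ with hp
  set w := ψ - p • χ with hw
  have hχχ : ⟪χ, χ⟫_ℂ = 1 := by
    rw [inner_self_eq_norm_sq_to_K, hχ]; norm_num
  have hψψ : ⟪ψ, ψ⟫_ℂ = 1 := by
    rw [inner_self_eq_norm_sq_to_K, hψ]; norm_num
  have hχw : ⟪χ, w⟫_ℂ = 0 := by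
    simp [hw, inner_sub_right, inner_smul_right, hχχ, hχ, hp]
  have hwχ : ⟪w, χ⟫_ℂ = 0 := by
    rw [← inner_conj_symm, hχw, map_zero]
  have hdecomp : ψ = p • χ + w := by simp [hw]
  have hpw : ⟪(p : ℂ) • χ, w⟫_ℂ = 0 := by
    rw [inner_smul_left, hχw, mul_zero]
  have hpc : ‖p • χ‖ = ‖p‖ := by simp [norm_smul, hχ]
  have hpyth : (1 : ℝ) = ‖p‖ ^ 2 + ‖w‖ ^ 2 := by
    have := norm_add_sq_eq_norm_sq_add_norm_sq_of_inner_eq_zero _ _ hpw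
    rw [← hdecomp, hpc] at this
    rw [hψ] at this
    norm_num at this
    rw [sq, sq]
    linarith
  -- expectation of S in w
  have hwS : ε1 * ‖w‖ ^ 2 ≤ (⟪w, S w⟫_ℂ).re := by
    rcases eq_or_ne w 0 with h0 | h0
    · simp [h0]
    · have hnw : (0:ℝ) < ‖w‖ := norm_pos_iff.mpr h0
      have hu : ‖(‖w‖⁻¹ : ℂ) • w‖ = 1 := by
        simp [norm_smul, abs_of_pos hnw, inv_mul_cancel₀ (ne_of_gt hnw)]
      have huo : ⟪χ, (‖w‖⁻¹ : ℂ) • w⟫_ℂ = 0 := by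
        simp [inner_smul_right, hχw]
      have hgap := hSgap _ hu huo
      rw [map_smul, inner_smul_left, inner_smul_right] at hgap
      have hcast : ((‖w‖:ℂ))⁻¹ = (((‖w‖⁻¹ : ℝ)) : ℂ) := by push_cast; ring
      have hre : ((starRingEnd ℂ) ((‖w‖:ℂ))⁻¹ * (((‖w‖:ℂ))⁻¹ * ⟪w, S w⟫_ℂ)).re
          = (‖w‖⁻¹) ^ 2 * (⟪w, S w⟫_ℂ).re := by
        rw [hcast, Complex.conj_ofReal, ← mul_assoc, ← Complex.ofReal_mul,
          Complex.re_ofReal_mul, ← sq]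
      rw [hre] at hgap
      have h2 : ε1 * ‖w‖ ^ 2 ≤ (‖w‖⁻¹) ^ 2 * (⟪w, S w⟫_ℂ).re * ‖w‖ ^ 2 := by
        nlinarith [sq_nonneg ‖w‖]
      calc ε1 * ‖w‖ ^ 2 ≤ (‖w‖⁻¹) ^ 2 * (⟪w, S w⟫_ℂ).re * ‖w‖ ^ 2 := h2
        _ = (⟪w, S w⟫_ℂ).re := by field_simp
  -- expectation of S in ψ
  have hSw : ⟪χ, S w⟫_ℂ = 0 := by
    rw [← hS χ w, hSχ, inner_smul_left, hχw, mul_zero]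
  have hwSχ : ⟪w, S χ⟫_ℂ = 0 := by
    rw [hSχ, inner_smul_right, hwχ, mul_zero]
  have hconjp : (starRingEnd ℂ) p * p = ((‖p‖ ^ 2 : ℝ) : ℂ) := by
    rw [mul_comm, Complex.mul_conj]
    norm_cast
    simp [Complex.normSq_eq_norm_sq]
  have hinner : ⟪ψ, S ψ⟫_ℂ = ((ε0 : ℂ)) * ((starRingEnd ℂ) p * p) + ⟪w, S w⟫_ℂ := by
    conv_lhs => rw [hdecomp]
    rw [map_add, map_smul, hSχ]
    simp only [inner_add_left, inner_add_right, inner_smul_left,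
      inner_smul_right, hχχ, hSw, hwχ, hχw]
    ring
  have hSψ : (⟪ψ, S ψ⟫_ℂ).re = ε0 * ‖p‖ ^ 2 + (⟪w, S w⟫_ℂ).re := by
    rw [hinner, hconjp, Complex.add_re, ← Complex.ofReal_mul, Complex.ofReal_re]
  -- ⟪ψ, S ψ⟫.re ≤ E0
  have hψS_le : (⟪ψ, S ψ⟫_ℂ).re ≤ E0 := by
    have h1 := hV ψ
    have h2 : (⟪ψ, T ψ⟫_ℂ).re = E0 := by
      rw [hTψ, inner_smul_right, hψψ]; simp
    have h3 : ⟪ψ, (T - S) ψ⟫_ℂ = ⟪ψ, T ψ⟫_ℂ - ⟪ψ, S ψ⟫_ℂ := by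
      simp [inner_sub_right]
    rw [h3, Complex.sub_re, h2] at h1; linarith
  -- E0 ≤ ε0 + VU
  have hE0le : E0 ≤ ε0 + VU := by
    have h1 := hTgr χ
    rw [hχ] at h1; norm_num at h1
    have h2 : (⟪χ, S χ⟫_ℂ).re = ε0 := by
      rw [hSχ, inner_smul_right, hχχ]; simp
    have h3 : ⟪χ, (T - S) χ⟫_ℂ = ⟪χ, T χ⟫_ℂ - ⟪χ, S χ⟫_ℂ := by
      simp [inner_sub_right]
    rw [h3, Complex.sub_re, h2] at hVU; linarith
  -- combine
  have hw2 : ‖w‖ ^ 2 = 1 - ‖p‖ ^ 2 := by linarith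
  rw [hw2] at hwS
  have key : (ε1 - ε0) * (1 - ‖p‖ ^ 2) ≤ VU := by linarith
  have hfin : 1 - ‖p‖ ^ 2 ≤ VU / (ε1 - ε0) := by
    rw [le_div_iff₀ (by linarith)]; linarith
  linarith
end

section
/- Let A and B be symmetric linear operators on E, let x₁ < x₂ be real numbers, and let χ₁, χ₂ be unit vectors such that for each i ∈ {1,2}, χᵢ minimizes the Rayleigh quotient of A − xᵢ • B, i.e. re⟪χᵢ, (A − xᵢ • B) χᵢ⟫ ≤ re⟪v, (A − xᵢ • B) v⟫ for every unit vector v. Then re⟪χ₁, B χ₁⟫ ≤ re⟪χ₂, B χ₂⟫. -/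
open scoped InnerProductSpace

/-- Variational monotonicity (proof of Lemma 1): if for `i = 1, 2` the unit
vector `χᵢ` minimizes the Rayleigh quotient of `A − xᵢ • B` over unit vectors,
and `x₁ < x₂`, then `re⟪χ₁, B χ₁⟫ ≤ re⟪χ₂, B χ₂⟫`. -/
theorem expectation_monotone_in_parameter
    {E : Type*} [NormedAddCommGroup E] [InnerProductSpace ℂ E]
    [FiniteDimensional ℂ E] [Nontrivial E]
    (A B : E →ₗ[ℂ] E) (hA : A.IsSymmetric) (hB : B.IsSymmetric)
    (x₁ x₂ : ℝ) (hx : x₁ < x₂)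
    (χ₁ χ₂ : E) (hχ₁ : ‖χ₁‖ = 1) (hχ₂ : ‖χ₂‖ = 1)
    (hmin₁ : ∀ v : E, ‖v‖ = 1 →
      (⟪χ₁, (A - (x₁ : ℂ) • B) χ₁⟫_ℂ).re ≤ (⟪v, (A - (x₁ : ℂ) • B) v⟫_ℂ).re)
    (hmin₂ : ∀ v : E, ‖v‖ = 1 →
      (⟪χ₂, (A - (x₂ : ℂ) • B) χ₂⟫_ℂ).re ≤ (⟪v, (A - (x₂ : ℂ) • B) v⟫_ℂ).re) :
    (⟪χ₁, B χ₁⟫_ℂ).re ≤ (⟪χ₂, B χ₂⟫_ℂ).re := by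
  have h1 := hmin₁ χ₂ hχ₂
  have h2 := hmin₂ χ₁ hχ₁
  simp only [LinearMap.sub_apply, LinearMap.smul_apply, inner_sub_right,
    inner_smul_right, Complex.sub_re, Complex.mul_re, Complex.ofReal_re,
    Complex.ofReal_im, zero_mul, sub_zero] at h1 h2
  nlinarith [h1, h2, hx]
end

section
/- Let t > 0 and Ec ≥ 0 be real numbers, and let h, f : ℝ → ℝ be such that for every x in the open interval (−t, t), h has derivative f(x) at x, and f is monotone increasing on (−t, t). Let μ ∈ (−t, t) and let y be a real number with −t + 2·Ec·f(μ) < y < t + 2·Ec·f(μ). Then there exists a unique x ∈ (−t, t) such that x + 2·Ec·f(x) = y. -/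
/-- Analytic core of Lemma 1: if `f` is a monotone increasing function on the
open interval `(−t, t)` which is the derivative of some function `h` there,
then for every `y` with `−t + 2·Ec·f(μ) < y < t + 2·Ec·f(μ)` (where
`μ ∈ (−t, t)`), there is a unique `x ∈ (−t, t)` with `x + 2·Ec·f(x) = y`. -/
theorem lemma1_unique_mu_prime
    (t Ec : ℝ) (ht : 0 < t) (hEc : 0 ≤ Ec)
    (h f : ℝ → ℝ)
    (hderiv : ∀ x ∈ Set.Ioo (-t) t, HasDerivAt h (f x) x)
    (hmono : ∀ x₁ ∈ Set.Ioo (-t) t, ∀ x₂ ∈ Set.Ioo (-t) t, x₁ ≤ x₂ → f x₁ ≤ f x₂)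
    (μ : ℝ) (hμ : μ ∈ Set.Ioo (-t) t)
    (y : ℝ) (hy₁ : -t + 2 * Ec * f μ < y) (hy₂ : y < t + 2 * Ec * f μ) :
    ∃! x : ℝ, x ∈ Set.Ioo (-t) t ∧ x + 2 * Ec * f x = y := by
  obtain ⟨hμ₁, hμ₂⟩ := hμ
  set L : ℝ := min μ (y - 2 * Ec * f μ) with hL
  set U : ℝ := max μ (y - 2 * Ec * f μ) with hU
  have hLt : -t < L := lt_min hμ₁ (by linarith)
  have hUt : U < t := max_lt hμ₂ (by linarith)
  set a : ℝ := (-t + L) / 2 with ha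
  set b : ℝ := (U + t) / 2 with hb
  have haL : a < L := by rw [ha]; linarith
  have hat : -t < a := by rw [ha]; linarith
  have hbU : U < b := by rw [hb]; linarith
  have hbt : b < t := by rw [hb]; linarith
  have hLU : L ≤ U := min_le_max
  have hab : a ≤ b := by linarith
  have hsub : Set.Icc a b ⊆ Set.Ioo (-t) t := fun x hx =>
    ⟨lt_of_lt_of_le hat hx.1, lt_of_le_of_lt hx.2 hbt⟩
  -- the auxiliary function H with derivative g x = x + 2Ec f x
  set H : ℝ → ℝ := fun x => x ^ 2 / 2 + 2 * Ec * h x with hH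
  have hHderiv : ∀ x ∈ Set.Icc a b,
      HasDerivWithinAt H (x + 2 * Ec * f x) (Set.Icc a b) x := by
    intro x hx
    have h1 : HasDerivAt (fun x : ℝ => x ^ 2 / 2) x x := by
      have := (hasDerivAt_pow 2 x).div_const 2
      simpa [mul_comm] using this
    have h2 := ((hderiv x (hsub hx)).const_mul (2 * Ec))
    exact (h1.add h2).hasDerivWithinAt
  have hga : a + 2 * Ec * f a < y := by
    have haμ : a ≤ μ := le_of_lt (lt_of_lt_of_le haL (min_le_left _ _))
    have hfa : f a ≤ f μ := hmono a ⟨hat, by linarith⟩ μ ⟨hμ₁, hμ₂⟩ haμ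
    have hay : a < y - 2 * Ec * f μ := lt_of_lt_of_le haL (min_le_right _ _)
    nlinarith
  have hgb : y < b + 2 * Ec * f b := by
    have hμb : μ ≤ b := le_of_lt (lt_of_le_of_lt (le_max_left _ _) hbU)
    have hfb : f μ ≤ f b := hmono μ ⟨hμ₁, hμ₂⟩ b ⟨by linarith, hbt⟩ hμb
    have hby : y - 2 * Ec * f μ < b := lt_of_le_of_lt (le_max_right _ _) hbU
    nlinarith
  obtain ⟨c, hc, hcy⟩ :=
    exists_hasDerivWithinAt_eq_of_gt_of_lt hab hHderiv hga hgb
  have hcy' : c + 2 * Ec * f c = y := hcy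
  refine ⟨c, ⟨⟨lt_trans hat hc.1, lt_trans hc.2 hbt⟩, hcy'⟩, ?_⟩
  rintro x ⟨hx, hxy⟩
  have hcmem : c ∈ Set.Ioo (-t) t := ⟨lt_trans hat hc.1, lt_trans hc.2 hbt⟩
  by_contra hne
  rcases lt_or_gt_of_ne hne with hlt | hgt
  · have := hmono x hx c hcmem hlt.le
    nlinarith
  · have := hmono c hcmem x hx hgt.le
    nlinarith
end

section
/- Let T and S be symmetric linear operators on E with V := T − S positive semidefinite. Let E0, E1, ε0, ε1 be real numbers and ψ, χ unit vectors in E such that: (i) T ψ = E0 • ψ and re⟪v, T v⟫ ≥ E0·‖v‖² for all v; (ii) E1 is the least element of the set {re⟪v, T v⟫ : ‖v‖ = 1 and ⟪ψ, v⟫ = 0}; (iii) S χ = ε0 • χ and re⟪v, S v⟫ ≥ ε0·‖v‖² for all v; (iv) re⟪v, S v⟫ ≥ ε1 for every unit vector v with ⟪χ, v⟫ = 0. Then E1 − E0 ≥ (ε1 − ε0) − re⟪χ, V χ⟫. -/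
open scoped InnerProductSpace

/-- The gap inequality `δ ≥ δ₀ − ⟪χ, V χ⟫` (starting point of the proofs of
Theorems 1 and 3): the spectral gap `E1 − E0` of the perturbed Hamiltonian
`T = S + V` is at least the gap `ε1 − ε0` of `S` minus the expectation of the
positive perturbation `V = T - S` in the ground state `χ` of `S`. -/
theorem gap_inequality
    {E : Type*} [NormedAddCommGroup E] [InnerProductSpace ℂ E]
    [FiniteDimensional ℂ E] [Nontrivial E]
    (T S : E →ₗ[ℂ] E) (hT : T.IsSymmetric) (hS : S.IsSymmetric)
    (hV : ∀ v : E, 0 ≤ (⟪v, (T - S) v⟫_ℂ).re)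
    (E0 E1 ε0 ε1 : ℝ) (ψ χ : E) (hψ : ‖ψ‖ = 1) (hχ : ‖χ‖ = 1)
    (hTψ : T ψ = (E0 : ℂ) • ψ)
    (hTgr : ∀ v : E, E0 * ‖v‖ ^ 2 ≤ (⟪v, T v⟫_ℂ).re)
    (hE1 : IsLeast {r : ℝ | ∃ v : E, ‖v‖ = 1 ∧ ⟪ψ, v⟫_ℂ = 0 ∧ r = (⟪v, T v⟫_ℂ).re} E1)
    (hSχ : S χ = (ε0 : ℂ) • χ)
    (hSgr : ∀ v : E, ε0 * ‖v‖ ^ 2 ≤ (⟪v, S v⟫_ℂ).re)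
    (hSgap : ∀ v : E, ‖v‖ = 1 → ⟪χ, v⟫_ℂ = 0 → ε1 ≤ (⟪v, S v⟫_ℂ).re) :
    (ε1 - ε0) - (⟪χ, (T - S) χ⟫_ℂ).re ≤ E1 - E0 := by
  obtain ⟨⟨v, hv1, hvψ, hE1v⟩, -⟩ := hE1
  have hVsub : ∀ u : E, (⟪u, (T - S) u⟫_ℂ).re = (⟪u, T u⟫_ℂ).re - (⟪u, S u⟫_ℂ).re := by
    intro u; simp [LinearMap.sub_apply, inner_sub_right]
  set W : ℝ := (⟪χ, (T - S) χ⟫_ℂ).re with hWdef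
  have hχχ : ⟪χ, χ⟫_ℂ = 1 := by rw [inner_self_eq_norm_sq_to_K, hχ]; norm_num
  have hψψ : ⟪ψ, ψ⟫_ℂ = 1 := by rw [inner_self_eq_norm_sq_to_K, hψ]; norm_num
  have hSχχ : (⟪χ, S χ⟫_ℂ).re = ε0 := by
    rw [hSχ, inner_smul_right, hχχ]; simp
  have hTχ : (⟪χ, T χ⟫_ℂ).re = ε0 + W := by
    rw [hWdef, hVsub]; rw [hSχχ]; ring
  have hWpos : 0 ≤ W := hV χ
  have ha : E0 ≤ ε0 + W := by
    have := hTgr χ; rw [hχ, hTχ] at this; simpa using this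
  have hE0E1 : E0 ≤ E1 := by
    have := hTgr v; rw [hv1] at this; rw [hE1v]; simpa using this
  by_cases hcase : ε1 ≤ E0
  · linarith
  push_neg at hcase
  suffices h : ε1 ≤ E1 by linarith
  -- scaled gap inequality
  have hSgap' : ∀ u : E, ⟪χ, u⟫_ℂ = 0 → ε1 * ‖u‖ ^ 2 ≤ (⟪u, S u⟫_ℂ).re := by
    intro u hu
    rcases eq_or_ne u 0 with rfl | hu0
    · simp
    · have hnu : ‖u‖ ≠ 0 := norm_ne_zero_iff.mpr hu0
      set w : E := ((‖u‖⁻¹ : ℝ) : ℂ) • u with hwdef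
      have hw1 : ‖w‖ = 1 := by
        rw [hwdef, norm_smul]
        simp [inv_mul_cancel₀ hnu]
      have hwχ : ⟪χ, w⟫_ℂ = 0 := by
        rw [hwdef, inner_smul_right, hu, mul_zero]
      have huw : u = ((‖u‖ : ℝ) : ℂ) • w := by
        rw [hwdef, smul_smul]
        norm_cast
        rw [mul_inv_cancel₀ hnu]
        simp
      have hkey : (⟪u, S u⟫_ℂ).re = ‖u‖ ^ 2 * (⟪w, S w⟫_ℂ).re := by
        conv_lhs => rw [huw]
        rw [LinearMap.map_smul, inner_smul_left, inner_smul_right, Complex.conj_ofReal]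
        rw [show ((‖u‖ : ℝ) : ℂ) * (((‖u‖ : ℝ) : ℂ) * ⟪w, S w⟫_ℂ)
            = ((‖u‖ ^ 2 : ℝ) : ℂ) * ⟪w, S w⟫_ℂ by push_cast; ring]
        rw [Complex.re_ofReal_mul]
      rw [hkey]
      have := hSgap w hw1 hwχ
      have hnn : (0:ℝ) ≤ ‖u‖ ^ 2 := by positivity
      nlinarith
  set c : ℂ := ⟪χ, v⟫_ℂ with hcdef
  set p : ℂ := ⟪χ, ψ⟫_ℂ with hpdef
  have hvv : ⟪v, v⟫_ℂ = 1 := by rw [inner_self_eq_norm_sq_to_K, hv1]; norm_num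
  have hvψ' : ⟪v, ψ⟫_ℂ = 0 := by rw [← inner_conj_symm, hvψ, map_zero]
  have hψTv : ⟪ψ, T v⟫_ℂ = 0 := by
    rw [← hT ψ v, hTψ, inner_smul_left, hvψ, mul_zero]
  have hvTψ : ⟪v, T ψ⟫_ℂ = 0 := by rw [hTψ, inner_smul_right, hvψ', mul_zero]
  have hψTψ : ⟪ψ, T ψ⟫_ℂ = (E0 : ℂ) := by rw [hTψ, inner_smul_right, hψψ, mul_one]
  by_cases hc : c = 0
  · have h1 := hSgap v hv1 hc
    have h2 := hV v
    rw [hVsub] at h2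
    rw [hE1v]; linarith
  · set φ : E := c • ψ - p • v with hφdef
    have hφχ : ⟪χ, φ⟫_ℂ = 0 := by
      rw [hφdef, inner_sub_right, inner_smul_right, inner_smul_right, ← hpdef, ← hcdef]
      ring
    have hφn : ‖φ‖ ^ 2 = ‖c‖ ^ 2 + ‖p‖ ^ 2 := by
      have h0 : (⟪φ, φ⟫_ℂ) = ((‖c‖ ^ 2 + ‖p‖ ^ 2 : ℝ) : ℂ) := by
        simp only [hφdef, inner_sub_left, inner_sub_right, inner_smul_left,
          inner_smul_right, hψψ, hvv, hvψ, hvψ']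
        push_cast
        rw [← Complex.conj_mul' c, ← Complex.conj_mul' p]
        ring
      have h1 : (⟪φ, φ⟫_ℂ) = ((‖φ‖ ^ 2 : ℝ) : ℂ) := by
        rw [inner_self_eq_norm_sq_to_K]; norm_cast
      rw [h0] at h1
      exact_mod_cast h1.symm
    have hTφ : (⟪φ, T φ⟫_ℂ).re = ‖c‖ ^ 2 * E0 + ‖p‖ ^ 2 * (⟪v, T v⟫_ℂ).re := by
      have h0 : (⟪φ, T φ⟫_ℂ)
          = ((‖c‖ ^ 2 : ℝ) : ℂ) * (E0 : ℂ) + ((‖p‖ ^ 2 : ℝ) : ℂ) * ⟪v, T v⟫_ℂ := by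
        simp only [hφdef, map_sub, LinearMap.map_smul, inner_sub_left,
          inner_sub_right, inner_smul_left, inner_smul_right, hψTψ, hψTv, hvTψ]
        push_cast
        rw [← Complex.conj_mul' c, ← Complex.conj_mul' p]
        ring
      rw [h0, Complex.add_re, Complex.re_ofReal_mul, Complex.re_ofReal_mul]
      simp
    have hSφ := hSgap' φ hφχ
    have hVφ := hV φ
    rw [hVsub, hTφ] at hVφ
    rw [hφn] at hSφ
    have hc2 : 0 < ‖c‖ ^ 2 := by
      have : 0 < ‖c‖ := norm_pos_iff.mpr hc
      positivity
    have hp2 : (0:ℝ) ≤ ‖p‖ ^ 2 := by positivity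
    rw [hE1v]
    nlinarith [hSφ, hVφ, hc2, hp2, hcase]
end

section
/- Let T and S be symmetric linear operators on E with V := T − S positive semidefinite. Let E0, E1, ε0, ε1, V_U be real numbers and ψ, χ unit vectors in E such that: (i) T ψ = E0 • ψ and re⟪v, T v⟫ ≥ E0·‖v‖² for all v; (ii) E1 is the least element of the set {re⟪v, T v⟫ : ‖v‖ = 1 and ⟪ψ, v⟫ = 0}; (iii) S χ = ε0 • χ and re⟪v, S v⟫ ≥ ε0·‖v‖² for all v; (iv) re⟪v, S v⟫ ≥ ε1 for every unit vector v with ⟪χ, v⟫ = 0; (v) re⟪χ, V χ⟫ ≤ V_U and V_U < ε1 − ε0. Then E1 − E0 ≥ (ε1 − ε0) − V_U and E1 > E0; in particular T has a positive spectral gap above its ground state. -/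
open scoped InnerProductSpace

/-- Abstract content of Theorem 3: if an upper bound `V_U` on the expectation
of the positive perturbation `V = T - S` in the ground state `χ` of `S` is
smaller than the spectral gap `ε1 − ε0` of `S`, then the perturbed Hamiltonian
`T = S + V` has gap at least `(ε1 − ε0) − V_U > 0` above its ground state. -/
theorem theorem3_abstract
    {E : Type*} [NormedAddCommGroup E] [InnerProductSpace ℂ E]
    [FiniteDimensional ℂ E] [Nontrivial E]
    (T S : E →ₗ[ℂ] E) (hT : T.IsSymmetric) (hS : S.IsSymmetric)
    (hV : ∀ v : E, 0 ≤ (⟪v, (T - S) v⟫_ℂ).re)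
    (E0 E1 ε0 ε1 VU : ℝ) (ψ χ : E) (hψ : ‖ψ‖ = 1) (hχ : ‖χ‖ = 1)
    (hTψ : T ψ = (E0 : ℂ) • ψ)
    (hTgr : ∀ v : E, E0 * ‖v‖ ^ 2 ≤ (⟪v, T v⟫_ℂ).re)
    (hE1 : IsLeast {r : ℝ | ∃ v : E, ‖v‖ = 1 ∧ ⟪ψ, v⟫_ℂ = 0 ∧ r = (⟪v, T v⟫_ℂ).re} E1)
    (hSχ : S χ = (ε0 : ℂ) • χ)
    (hSgr : ∀ v : E, ε0 * ‖v‖ ^ 2 ≤ (⟪v, S v⟫_ℂ).re)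
    (hSgap : ∀ v : E, ‖v‖ = 1 → ⟪χ, v⟫_ℂ = 0 → ε1 ≤ (⟪v, S v⟫_ℂ).re)
    (hVU : (⟪χ, (T - S) χ⟫_ℂ).re ≤ VU)
    (hVUgap : VU < ε1 - ε0) :
    (ε1 - ε0) - VU ≤ E1 - E0 ∧ E0 < E1 := by
  obtain ⟨⟨v, hv1, hvψ, hE1v⟩, -⟩ := hE1
  have hψψ : ⟪ψ, ψ⟫_ℂ = 1 := by
    rw [inner_self_eq_norm_sq_to_K, hψ]; norm_num
  have hχχ : ⟪χ, χ⟫_ℂ = 1 := by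
    rw [inner_self_eq_norm_sq_to_K, hχ]; norm_num
  have hvv : ⟪v, v⟫_ℂ = 1 := by
    rw [inner_self_eq_norm_sq_to_K, hv1]; norm_num
  have hvψ' : ⟪v, ψ⟫_ℂ = 0 := by
    rw [← inner_conj_symm, hvψ, map_zero]
  have hsplit : ∀ w : E, ⟪w, T w⟫_ℂ = ⟪w, S w⟫_ℂ + ⟪w, (T - S) w⟫_ℂ := by
    intro w; simp [LinearMap.sub_apply, inner_sub_right]
  -- re⟪χ, S χ⟫ = ε0
  have hχS : (⟪χ, S χ⟫_ℂ).re = ε0 := by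
    rw [hSχ, inner_smul_right, hχχ, mul_one, Complex.ofReal_re]
  -- E0 ≤ ε0 + VU
  have hE0le : E0 ≤ ε0 + VU := by
    have h1 := hTgr χ
    rw [hχ, hsplit χ, Complex.add_re, hχS] at h1
    simpa using le_trans h1 (by linarith)
  -- E0 ≤ E1
  have hE0E1 : E0 ≤ E1 := by
    have h := hTgr v; rw [hv1] at h; rw [hE1v]; simpa using h
  -- S ≤ T in expectation
  have hST : ∀ w : E, (⟪w, S w⟫_ℂ).re ≤ (⟪w, T w⟫_ℂ).re := by
    intro w
    have := hV w
    rw [hsplit w, Complex.add_re]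
    linarith
  -- scaled gap inequality for S on χ⊥
  have key : ∀ w : E, w ≠ 0 → ⟪χ, w⟫_ℂ = 0 → ε1 * ‖w‖ ^ 2 ≤ (⟪w, S w⟫_ℂ).re := by
    intro w hw hwχ
    have hn : (0:ℝ) < ‖w‖ := norm_pos_iff.mpr hw
    have hu1 : ‖((‖w‖:ℂ))⁻¹ • w‖ = 1 := by
      rw [norm_smul]
      simp [hn.ne']
    have huχ : ⟪χ, ((‖w‖:ℂ))⁻¹ • w⟫_ℂ = 0 := by
      rw [inner_smul_right, hwχ, mul_zero]
    have h := hSgap _ hu1 huχ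
    rw [map_smul, inner_smul_left, inner_smul_right, map_inv₀, Complex.conj_ofReal,
      ← Complex.ofReal_inv, Complex.re_ofReal_mul, Complex.re_ofReal_mul] at h
    have h2 : ε1 * ‖w‖ ^ 2 ≤ (‖w‖⁻¹ * (‖w‖⁻¹ * (⟪w, S w⟫_ℂ).re)) * ‖w‖ ^ 2 := by
      nlinarith
    have hc : ‖w‖⁻¹ * ‖w‖ = 1 := inv_mul_cancel₀ hn.ne'
    calc ε1 * ‖w‖ ^ 2 ≤ (‖w‖⁻¹ * (‖w‖⁻¹ * (⟪w, S w⟫_ℂ).re)) * ‖w‖ ^ 2 := h2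
      _ = (‖w‖⁻¹ * ‖w‖) * ((‖w‖⁻¹ * ‖w‖) * (⟪w, S w⟫_ℂ).re) := by ring
      _ = (⟪w, S w⟫_ℂ).re := by rw [hc]; ring
  -- ε1 ≤ E1
  have hε1E1 : ε1 ≤ E1 := by
    set a := ⟪χ, ψ⟫_ℂ with ha
    set b := ⟪χ, v⟫_ℂ with hb
    by_cases hb0 : b = 0
    · have h := hSgap v hv1 hb0
      rw [hE1v]
      exact le_trans h (hST v)
    · set w : E := b • ψ - a • v with hw
      have hwχ : ⟪χ, w⟫_ℂ = 0 := by
        rw [hw, inner_sub_right, inner_smul_right, inner_smul_right, ← ha, ← hb]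
        ring
      have hψw : ⟪ψ, w⟫_ℂ = b := by
        rw [hw, inner_sub_right, inner_smul_right, inner_smul_right, hψψ, hvψ]
        ring
      have hw0 : w ≠ 0 := by
        intro h
        rw [h, inner_zero_right] at hψw
        exact hb0 hψw.symm
      -- ⟪ψ, T v⟫ = 0
      have hψTv : ⟪ψ, T v⟫_ℂ = 0 := by
        rw [← hT ψ v, hTψ, inner_smul_left, hvψ, mul_zero]
      have hvTψ : ⟪v, T ψ⟫_ℂ = 0 := by
        rw [hTψ, inner_smul_right, hvψ', mul_zero]
      have hψTψ : ⟪ψ, T ψ⟫_ℂ = (E0 : ℂ) := by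
        rw [hTψ, inner_smul_right, hψψ, mul_one]
      -- norm of w
      have hww : (‖w‖ ^ 2 : ℝ) = Complex.normSq b + Complex.normSq a := by
        have : ⟪w, w⟫_ℂ = (Complex.normSq b : ℂ) + (Complex.normSq a : ℂ) := by
          rw [hw]
          simp only [inner_sub_left, inner_sub_right, inner_smul_left, inner_smul_right,
            hψψ, hvv, hvψ, hvψ']
          rw [Complex.normSq_eq_conj_mul_self, Complex.normSq_eq_conj_mul_self]
          ring
        rw [inner_self_eq_norm_sq_to_K] at this
        have h3 : ((‖w‖ ^ 2 : ℝ) : ℂ)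
            = ((Complex.normSq b + Complex.normSq a : ℝ) : ℂ) := by
          push_cast
          exact this
        exact Complex.ofReal_injective h3
      -- ⟪w, T w⟫
      have hwTw : (⟪w, T w⟫_ℂ).re = Complex.normSq b * E0 + Complex.normSq a * E1 := by
        have : ⟪w, T w⟫_ℂ = (Complex.normSq b : ℂ) * (E0 : ℂ)
            + (Complex.normSq a : ℂ) * ⟪v, T v⟫_ℂ := by
          rw [hw]
          simp only [map_sub, map_smul, inner_sub_left, inner_sub_right,
            inner_smul_left, inner_smul_right, hψTv, hvTψ, hψTψ]
          rw [Complex.normSq_eq_conj_mul_self, Complex.normSq_eq_conj_mul_self]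
          ring
        rw [this, Complex.add_re, Complex.re_ofReal_mul, Complex.re_ofReal_mul,
          Complex.ofReal_re, ← hE1v]
      have h1 := key w hw0 hwχ
      have h2 := hST w
      rw [hww] at h1
      have hbpos : 0 < Complex.normSq b := Complex.normSq_pos.mpr hb0
      have hapos : 0 ≤ Complex.normSq a := Complex.normSq_nonneg a
      rw [hwTw] at h2
      nlinarith
  exact ⟨by linarith, by linarith⟩
end

section
/- Let Γ be a symmetric linear operator on E with ‖Γ v‖ ≤ ‖v‖ for every v ∈ E, and let χ, ψ be unit vectors with Γ χ = χ. Then re⟪ψ, Γ ψ⟫ ≥ 2·‖⟪χ, ψ⟫‖² − 1. -/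
open scoped InnerProductSpace

/-- Core step of Theorems 2 and 4: if the symmetric contraction `Γ` fixes the
unit vector `χ`, then its expectation in any unit vector `ψ` is bounded below
by `2‖⟪χ, ψ⟫‖² − 1`. -/
theorem contraction_expectation_lower_bound
    {E : Type*} [NormedAddCommGroup E] [InnerProductSpace ℂ E]
    [FiniteDimensional ℂ E] [Nontrivial E]
    (Γ : E →ₗ[ℂ] E) (hΓ : Γ.IsSymmetric)
    (hcontr : ∀ v : E, ‖Γ v‖ ≤ ‖v‖)
    (χ ψ : E) (hχ : ‖χ‖ = 1) (hψ : ‖ψ‖ = 1)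
    (hfix : Γ χ = χ) :
    2 * ‖⟪χ, ψ⟫_ℂ‖ ^ 2 - 1 ≤ (⟪ψ, Γ ψ⟫_ℂ).re := by
  set c : ℂ := ⟪χ, ψ⟫_ℂ with hc
  set φ : E := ψ - c • χ with hφ
  have hχχ : ⟪χ, χ⟫_ℂ = 1 := by
    rw [inner_self_eq_norm_sq_to_K, hχ]; norm_num
  have horth : ⟪χ, φ⟫_ℂ = 0 := by
    simp [hφ, inner_sub_right, inner_smul_right, hχχ, ← hc, hχ]
  have horth' : ⟪φ, χ⟫_ℂ = 0 := by
    rw [← inner_conj_symm, horth, map_zero]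
  have hψdecomp : ψ = c • χ + φ := by simp [hφ]
  -- Γ φ is orthogonal to χ
  have hΓφ : ⟪χ, Γ φ⟫_ℂ = 0 := by
    rw [← hΓ χ φ, hfix, horth]
  -- Pythagoras: 1 = ‖c‖² + ‖φ‖²
  have hpyth : ‖φ‖ ^ 2 = 1 - ‖c‖ ^ 2 := by
    have h := norm_add_sq (𝕜 := ℂ) (c • χ) φ
    rw [← hψdecomp, hψ] at h
    have hr : RCLike.re ⟪c • χ, φ⟫_ℂ = 0 := by
      rw [inner_smul_left, horth]; simp
    rw [hr] at h
    have : ‖c • χ‖ = ‖c‖ := by rw [norm_smul, hχ, mul_one]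
    rw [this] at h
    nlinarith
  -- expand ⟪ψ, Γ ψ⟫
  have hexp : ⟪ψ, Γ ψ⟫_ℂ = ⟪c • χ, c • χ⟫_ℂ + ⟪φ, Γ φ⟫_ℂ := by
    conv_lhs => rw [hψdecomp]
    rw [map_add, map_smul, hfix]
    rw [inner_add_left, inner_add_right, inner_add_right]
    have h1 : ⟪c • χ, Γ φ⟫_ℂ = 0 := by rw [inner_smul_left, hΓφ, mul_zero]
    have h2 : ⟪φ, c • χ⟫_ℂ = 0 := by rw [inner_smul_right, horth', mul_zero]
    rw [h1, h2]; ring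
  have hcs : |(⟪φ, Γ φ⟫_ℂ).re| ≤ ‖φ‖ ^ 2 := by
    calc |(⟪φ, Γ φ⟫_ℂ).re| ≤ ‖⟪φ, Γ φ⟫_ℂ‖ := Complex.abs_re_le_norm _
      _ ≤ ‖φ‖ * ‖Γ φ‖ := norm_inner_le_norm _ _
      _ ≤ ‖φ‖ * ‖φ‖ := by
          exact mul_le_mul_of_nonneg_left (hcontr φ) (norm_nonneg _)
      _ = ‖φ‖ ^ 2 := (sq ‖φ‖).symm
  have hsmul : (⟪c • χ, c • χ⟫_ℂ).re = ‖c‖ ^ 2 := by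
    rw [inner_smul_left, inner_smul_right, hχχ, mul_one, ← Complex.normSq_eq_conj_mul_self]
    simp [Complex.normSq_eq_norm_sq, sq]
  have : (⟪ψ, Γ ψ⟫_ℂ).re = ‖c‖ ^ 2 + (⟪φ, Γ φ⟫_ℂ).re := by
    rw [hexp, Complex.add_re, hsmul]
  rw [this]
  have := abs_le.mp hcs
  nlinarith
end

section
/- Let T and S be symmetric linear operators on E with V := T − S positive semidefinite, and let Γ be a symmetric linear operator on E with ‖Γ v‖ ≤ ‖v‖ for every v. Let E0, E1, ε0, ε1, V_U be real numbers and ψ, χ unit vectors such that: (i) T ψ = E0 • ψ and re⟪v, T v⟫ ≥ E0·‖v‖² for all v; (ii) E1 is the least element of the set {re⟪v, T v⟫ : ‖v‖ = 1 and ⟪ψ, v⟫ = 0}, and E1 > E0; (iii) S χ = ε0 • χ and re⟪v, S v⟫ ≥ ε0·‖v‖² for all v; (iv) re⟪v, S v⟫ ≥ ε1 for every unit vector v with ⟪χ, v⟫ = 0, and ε1 > ε0; (v) re⟪χ, V χ⟫ ≤ V_U; (vi) Γ χ = χ. Then re⟪ψ, Γ ψ⟫ ≥ 1 − 2·V_U/(ε1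 − ε0). -/
open scoped InnerProductSpace

/-- Abstract content of Theorem 4: the Majorana-like correlation function
`⟨ψ| Γ |ψ⟩` in the ground state `ψ` of the perturbed Hamiltonian `T = S + V`
is at least `1 − 2·V_U/(ε1 − ε0)`, where `ε1 − ε0` is the gap of `S` and
`V_U` is an upper bound on `⟪χ, V χ⟫` in the ground state `χ` of `S`, which
the symmetric contraction `Γ` fixes. -/
theorem theorem4_abstract
    {E : Type*} [NormedAddCommGroup E] [InnerProductSpace ℂ E]
    [FiniteDimensional ℂ E] [Nontrivial E]
    (T S Γ : E →ₗ[ℂ] E) (hT : T.IsSymmetric) (hS : S.IsSymmetric)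
    (hΓ : Γ.IsSymmetric) (hcontr : ∀ v : E, ‖Γ v‖ ≤ ‖v‖)
    (hV : ∀ v : E, 0 ≤ (⟪v, (T - S) v⟫_ℂ).re)
    (E0 E1 ε0 ε1 VU : ℝ) (ψ χ : E) (hψ : ‖ψ‖ = 1) (hχ : ‖χ‖ = 1)
    (hTψ : T ψ = (E0 : ℂ) • ψ)
    (hTgr : ∀ v : E, E0 * ‖v‖ ^ 2 ≤ (⟪v, T v⟫_ℂ).re)
    (hE1 : IsLeast {r : ℝ | ∃ v : E, ‖v‖ = 1 ∧ ⟪ψ, v⟫_ℂ = 0 ∧ r = (⟪v, T v⟫_ℂ).re} E1)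
    (hgapT : E0 < E1)
    (hSχ : S χ = (ε0 : ℂ) • χ)
    (hSgr : ∀ v : E, ε0 * ‖v‖ ^ 2 ≤ (⟪v, S v⟫_ℂ).re)
    (hSgap : ∀ v : E, ‖v‖ = 1 → ⟪χ, v⟫_ℂ = 0 → ε1 ≤ (⟪v, S v⟫_ℂ).re)
    (hgapS : ε0 < ε1)
    (hVU : (⟪χ, (T - S) χ⟫_ℂ).re ≤ VU)
    (hfix : Γ χ = χ) :
    1 - 2 * VU / (ε1 - ε0) ≤ (⟪ψ, Γ ψ⟫_ℂ).re := by
  have hχχ : ⟪χ, χ⟫_ℂ = 1 := by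
    rw [inner_self_eq_norm_sq_to_K, hχ]; norm_num
  set c : ℂ := ⟪χ, ψ⟫_ℂ with hc
  set w : E := ψ - c • χ with hw
  have hχw : ⟪χ, w⟫_ℂ = 0 := by
    simp [hw, inner_sub_right, inner_smul_right, hχχ, hχ, hc]
  have hwχ : ⟪w, χ⟫_ℂ = 0 := by
    rw [← inner_conj_symm, hχw]; simp
  have hψw : ψ = c • χ + w := by simp [hw]
  have hcc : (starRingEnd ℂ) c * c = ((‖c‖ ^ 2 : ℝ) : ℂ) := by
    rw [Complex.conj_mul']; push_cast; ring
  -- Pythagoras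
  have hpyth : ‖c‖ ^ 2 + ‖w‖ ^ 2 = 1 := by
    have h := norm_add_sq (𝕜 := ℂ) (c • χ) w
    rw [← hψw, hψ] at h
    have hz : RCLike.re ⟪c • χ, w⟫_ℂ = (0:ℝ) := by simp [inner_smul_left, hχw]
    rw [hz] at h
    have hcn : ‖c • χ‖ ^ 2 = ‖c‖ ^ 2 := by
      rw [norm_smul, hχ]; ring
    rw [hcn] at h
    linarith
  -- spectral gap bound for w
  have hwS : ε1 * ‖w‖ ^ 2 ≤ (⟪w, S w⟫_ℂ).re := by
    rcases eq_or_ne w 0 with h | h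
    · simp [h]
    · have hn : ‖w‖ ≠ 0 := norm_ne_zero_iff.mpr h
      have hu : ‖((‖w‖⁻¹ : ℝ) : ℂ) • w‖ = 1 := by
        simp [norm_smul, hn]
      have ho : ⟪χ, ((‖w‖⁻¹ : ℝ) : ℂ) • w⟫_ℂ = 0 := by
        simp [inner_smul_right, hχw]
      have hle := hSgap _ hu ho
      have hcomp : ⟪((‖w‖⁻¹ : ℝ) : ℂ) • w, S (((‖w‖⁻¹ : ℝ) : ℂ) • w)⟫_ℂ
          = (((‖w‖⁻¹ ^ 2 : ℝ)) : ℂ) * ⟪w, S w⟫_ℂ := by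
        rw [map_smul, inner_smul_left, inner_smul_right, Complex.conj_ofReal]
        push_cast; ring
      rw [hcomp, Complex.re_ofReal_mul] at hle
      have hpos : (0:ℝ) < ‖w‖ ^ 2 := by positivity
      calc ε1 * ‖w‖ ^ 2 ≤ (‖w‖⁻¹ ^ 2 * (⟪w, S w⟫_ℂ).re) * ‖w‖ ^ 2 :=
            mul_le_mul_of_nonneg_right hle hpos.le
        _ = (⟪w, S w⟫_ℂ).re := by field_simp
  -- ⟪χ, S w⟫ = 0
  have hχSw : ⟪χ, S w⟫_ℂ = 0 := by
    rw [← hS χ w, hSχ, inner_smul_left, hχw, mul_zero]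
  -- expansion of ⟪ψ, S ψ⟫
  have hexp : (⟪ψ, S ψ⟫_ℂ).re = ε0 * ‖c‖ ^ 2 + (⟪w, S w⟫_ℂ).re := by
    have hid : ⟪ψ, S ψ⟫_ℂ = (ε0 : ℂ) * ((‖c‖ ^ 2 : ℝ) : ℂ) + ⟪w, S w⟫_ℂ := by
      rw [hψw, map_add, map_smul, hSχ]
      simp only [inner_add_left, inner_add_right, inner_smul_left, inner_smul_right,
        hχχ, hχSw, hwχ, hχw, mul_zero, mul_one, zero_add, add_zero]
      linear_combination (ε0 : ℂ) * hcc
    rw [hid, Complex.add_re, Complex.re_ofReal_mul, Complex.ofReal_re]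
  -- upper bound on ⟪ψ, S ψ⟫
  have hψT : (⟪ψ, T ψ⟫_ℂ).re = E0 := by
    rw [hTψ, inner_smul_right, inner_self_eq_norm_sq_to_K, hψ]
    norm_num
  have hSle : (⟪ψ, S ψ⟫_ℂ).re ≤ E0 := by
    have h1 := hV ψ
    have h2 : (⟪ψ, (T - S) ψ⟫_ℂ).re = (⟪ψ, T ψ⟫_ℂ).re - (⟪ψ, S ψ⟫_ℂ).re := by
      simp [inner_sub_right]
    rw [h2] at h1
    linarith
  have hE0le : E0 ≤ ε0 + VU := by
    have h1 := hTgr χ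
    rw [hχ] at h1
    have hχS : (⟪χ, S χ⟫_ℂ).re = ε0 := by
      rw [hSχ, inner_smul_right, hχχ]; simp
    have h2 : (⟪χ, (T - S) χ⟫_ℂ).re = (⟪χ, T χ⟫_ℂ).re - ε0 := by
      simp [inner_sub_right, hχS]
    rw [h2] at hVU
    nlinarith
  -- bound on ‖w‖²
  have hmul : ε0 * ‖c‖ ^ 2 + ε0 * ‖w‖ ^ 2 = ε0 := by
    linear_combination ε0 * hpyth
  have hwbd : ‖w‖ ^ 2 ≤ VU / (ε1 - ε0) := by
    have key : (ε1 - ε0) * ‖w‖ ^ 2 ≤ VU := by nlinarith [hwS, hmul, hSle, hE0le, hexp]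
    rw [le_div_iff₀ (by linarith)]
    linarith [key]
  -- Γ expansion
  have hχΓw : ⟪χ, Γ w⟫_ℂ = 0 := by
    rw [← hΓ χ w, hfix, hχw]
  have hΓexp : (⟪ψ, Γ ψ⟫_ℂ).re = ‖c‖ ^ 2 + (⟪w, Γ w⟫_ℂ).re := by
    have hid : ⟪ψ, Γ ψ⟫_ℂ = ((‖c‖ ^ 2 : ℝ) : ℂ) + ⟪w, Γ w⟫_ℂ := by
      rw [hψw, map_add, map_smul, hfix]
      simp only [inner_add_left, inner_add_right, inner_smul_left, inner_smul_right,
        hχχ, hχΓw, hwχ, hχw, mul_zero, mul_one, zero_add, add_zero]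
      linear_combination hcc
    rw [hid, Complex.add_re, Complex.ofReal_re]
  have hΓlow : -(‖w‖ ^ 2) ≤ (⟪w, Γ w⟫_ℂ).re := by
    have h1 : |(⟪w, Γ w⟫_ℂ).re| ≤ ‖⟪w, Γ w⟫_ℂ‖ := Complex.abs_re_le_norm _
    have h2 : ‖⟪w, Γ w⟫_ℂ‖ ≤ ‖w‖ * ‖Γ w‖ := norm_inner_le_norm _ _
    have h3 : ‖w‖ * ‖Γ w‖ ≤ ‖w‖ * ‖w‖ :=
      mul_le_mul_of_nonneg_left (hcontr w) (norm_nonneg w)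
    have h4 := abs_le.mp (h1.trans (h2.trans h3))
    nlinarith [h4.1]
  have hfin : 1 - 2 * (VU / (ε1 - ε0)) ≤ (⟪ψ, Γ ψ⟫_ℂ).re := by
    rw [hΓexp]
    linarith [hpyth, hΓlow, hwbd]
  calc 1 - 2 * VU / (ε1 - ε0) = 1 - 2 * (VU / (ε1 - ε0)) := by ring
    _ ≤ _ := hfin
end

section
/- Let L be a positive natural number. For j : Fin L, let X j be the real matrix indexed by (Fin L → Bool) with entries (X j) f g = 1 if g = Function.update f j (!(f j)) and 0 otherwise, and let A = ∑ j, X j. Then for every real τ and every c : Fin L → Bool: (exp(τ • A)) c c = (cosh τ)^L, and (exp(τ • A)) c (fun i => !(c i)) = (sinh τ)^L. -/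
open Matrix Finset

set_option maxHeartbeats 1000000 in
private lemma exp_smul_of_sq_eq_one_gen {A : Type*} [NormedRing A] [NormedAlgebra ℝ A]
    [CompleteSpace A] (X : A) (hX2 : X * X = 1) (τ : ℝ) :
    NormedSpace.exp (τ • X) = Real.cosh τ • 1 + Real.sinh τ • X := by
  have hsq : X ^ 2 = 1 := by rw [sq, hX2]
  have hpe : ∀ k : ℕ, X ^ (2 * k) = 1 := fun k => by rw [pow_mul, hsq, one_pow]
  have hpo : ∀ k : ℕ, X ^ (2 * k + 1) = X := fun k => by rw [pow_succ, hpe, one_mul]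
  have e1 : (fun k : ℕ => (((2 * k).factorial : ℝ)⁻¹) • (τ • X) ^ (2 * k))
      = fun k : ℕ => (τ ^ (2 * k) / (2 * k).factorial) • (1 : A) := by
    funext k
    rw [smul_pow, hpe, smul_smul, div_eq_mul_inv, mul_comm]
  have e2 : (fun k : ℕ => (((2 * k + 1).factorial : ℝ)⁻¹) • (τ • X) ^ (2 * k + 1))
      = fun k : ℕ => (τ ^ (2 * k + 1) / (2 * k + 1).factorial) • X := by
    funext k
    rw [smul_pow, hpo, smul_smul, div_eq_mul_inv, mul_comm]
  have heven : HasSum (fun k : ℕ => (((2 * k).factorial : ℝ)⁻¹) • (τ • X) ^ (2 * k))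
      (Real.cosh τ • (1 : A)) := by
    rw [e1]; exact (Real.hasSum_cosh τ).smul_const 1
  have hodd : HasSum (fun k : ℕ => (((2 * k + 1).factorial : ℝ)⁻¹) • (τ • X) ^ (2 * k + 1))
      (Real.sinh τ • X) := by
    rw [e2]; exact (Real.hasSum_sinh τ).smul_const X
  have h := HasSum.even_add_odd (f := fun n => ((n.factorial : ℝ)⁻¹) • (τ • X) ^ n) heven hodd
  rw [NormedSpace.exp_eq_tsum ℝ]
  exact h.tsum_eq

private lemma exp_smul_of_sq_eq_one {m : Type*} [Fintype m] [DecidableEq m]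
    (X : Matrix m m ℝ) (hX2 : X * X = 1) (τ : ℝ) :
    NormedSpace.exp (τ • X) = Real.cosh τ • 1 + Real.sinh τ • X := by
  letI : SeminormedRing (Matrix m m ℝ) := Matrix.linftyOpSemiNormedRing
  letI : NormedRing (Matrix m m ℝ) := Matrix.linftyOpNormedRing
  letI : NormedAlgebra ℝ (Matrix m m ℝ) := Matrix.linftyOpNormedAlgebra
  exact exp_smul_of_sq_eq_one_gen X hX2 τ

private lemma flip_comm {L : ℕ} (f : Fin L → Bool) (j k : Fin L) :
    Function.update (Function.update f j (!f j)) k (!(Function.update f j (!f j)) k)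
      = Function.update (Function.update f k (!f k)) j (!(Function.update f k (!f k)) j) := by
  rcases eq_or_ne j k with rfl | h
  · rfl
  · rw [Function.update_of_ne h.symm, Function.update_of_ne h, Function.update_comm h]

private lemma X_mul_X {L : ℕ} (X : Fin L → Matrix (Fin L → Bool) (Fin L → Bool) ℝ)
    (hX : ∀ (j : Fin L) (f g : Fin L → Bool),
      X j f g = if g = Function.update f j (!(f j)) then 1 else 0)
    (j k : Fin L) (f g : Fin L → Bool) :
    (X j * X k) f g =
      if g = Function.update (Function.update f j (!f j)) k
          (!(Function.update f j (!f j)) k) then 1 else 0 := by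
  rw [Matrix.mul_apply]
  rw [Finset.sum_eq_single (Function.update f j (!f j))]
  · rw [hX, hX, if_pos rfl, one_mul]
  · intro h _ hh
    rw [hX, if_neg hh, zero_mul]
  · simp

private lemma X_commute {L : ℕ} (X : Fin L → Matrix (Fin L → Bool) (Fin L → Bool) ℝ)
    (hX : ∀ (j : Fin L) (f g : Fin L → Bool),
      X j f g = if g = Function.update f j (!(f j)) then 1 else 0)
    (j k : Fin L) : Commute (X j) (X k) := by
  ext f g
  rw [X_mul_X X hX, X_mul_X X hX, flip_comm]

private lemma X_sq {L : ℕ} (X : Fin L → Matrix (Fin L → Bool) (Fin L → Bool) ℝ)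
    (hX : ∀ (j : Fin L) (f g : Fin L → Bool),
      X j f g = if g = Function.update f j (!(f j)) then 1 else 0)
    (j : Fin L) : X j * X j = 1 := by
  ext f g
  rw [X_mul_X X hX, Matrix.one_apply]
  simp [Function.update_self, Bool.not_not, Function.update_idem, Function.update_eq_self,
    eq_comm]

private lemma noncommProd_entry {L : ℕ} (ch sh : ℝ)
    (M : Fin L → Matrix (Fin L → Bool) (Fin L → Bool) ℝ)
    (hM : ∀ (j : Fin L) (f g : Fin L → Bool),
      M j f g = (if g = f then ch else 0)
        + (if g = Function.update f j (!(f j)) then sh else 0))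
    (hcomm : ∀ j k, Commute (M j) (M k))
    (s : Finset (Fin L)) (f g : Fin L → Bool) :
    (s.noncommProd M (fun u _ v _ _ => hcomm u v)) f g =
      if ∀ j ∉ s, g j = f j then ∏ j ∈ s, (if g j = f j then ch else sh) else 0 := by
  induction s using Finset.induction_on generalizing f with
  | empty =>
      erw [Finset.noncommProd_empty, Matrix.one_apply]
      simp [funext_iff, eq_comm]
  | @insert a s ha ih =>
      erw [Finset.noncommProd_insert_of_notMem _ _ _ _ ha, Matrix.mul_apply]
      have key : ∀ h : Fin L → Bool,
          (s.noncommProd M (fun u _ v _ _ => hcomm u v)) h g =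
            if ∀ j ∉ s, g j = h j then ∏ j ∈ s, (if g j = h j then ch else sh) else 0 :=
        fun h => ih h
      simp only [hM, add_mul, ite_mul, zero_mul, Finset.sum_add_distrib,
        Finset.sum_ite_eq', Finset.mem_univ, if_true, key]
      set f' := Function.update f a (!f a) with hf'
      have hf'a : f' a = !f a := Function.update_self a (!f a) f
      have hf'ne : ∀ j, j ≠ a → f' j = f j := fun j hj => Function.update_of_ne hj _ _
      by_cases hga : g a = f a
      · have hc2 : ¬ (∀ j ∉ s, g j = f' j) := by
          intro hco
          have h1 := hco a ha
          rw [hf'a, hga] at h1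
          exact Bool.not_ne_self (f a) h1.symm
        rw [if_neg hc2, mul_zero, add_zero]
        have hiff : (∀ j ∉ s, g j = f j) ↔ (∀ j ∉ insert a s, g j = f j) := by
          constructor
          · intro hc j hj; exact hc j (fun hjs => hj (Finset.mem_insert_of_mem hjs))
          · intro hc j hj
            rcases eq_or_ne j a with rfl | hja
            · exact hga
            · exact hc j (by simp [hja, hj])
        by_cases hc : ∀ j ∉ insert a s, g j = f j
        · rw [if_pos (hiff.mpr hc), if_pos hc, Finset.prod_insert ha, if_pos hga]
        · rw [if_neg (fun h => hc (hiff.mp h)), if_neg hc, mul_zero]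
      · have hga' : g a = !f a := by
          cases hgaa : g a <;> cases hfaa : f a <;> simp_all
        have hc1 : ¬ (∀ j ∉ s, g j = f j) := fun hco => hga (hco a ha)
        rw [if_neg hc1, mul_zero, zero_add]
        have hiff : (∀ j ∉ s, g j = f' j) ↔ (∀ j ∉ insert a s, g j = f j) := by
          constructor
          · intro hc j hj
            have hja : j ≠ a := fun h => (by simp [h] at hj)
            have hjs : j ∉ s := fun h => hj (Finset.mem_insert_of_mem h)
            rw [hc j hjs, hf'ne j hja]
          · intro hc j hj
            rcases eq_or_ne j a with rfl | hja
            · rw [hga', hf'a]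
            · rw [hc j (by simp [hja, hj]), hf'ne j hja]
        have hprod : ∏ j ∈ s, (if g j = f' j then ch else sh)
            = ∏ j ∈ s, (if g j = f j then ch else sh) :=
          Finset.prod_congr rfl fun j hj => by
            rw [hf'ne j (fun h => ha (h ▸ hj))]
        by_cases hc : ∀ j ∉ insert a s, g j = f j
        · rw [if_pos (hiff.mpr hc), if_pos hc, Finset.prod_insert ha, if_neg hga, hprod]
        · rw [if_neg (fun h => hc (hiff.mp h)), if_neg hc, mul_zero]

/-- Generating functions on the Jordan–Wigner spin chain at `t = Δ`, `μ = 0`: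
with `X j` the spin-flip (Pauli `σ^x_j`) matrix and `A = ∑ j, X j`, the
diagonal entries of `exp (τ • A)` equal `(cosh τ)^L` and the entries between a
configuration and its global flip equal `(sinh τ)^L`. -/
theorem exp_sum_spin_flip_entries
    (L : ℕ) (hL : 0 < L)
    (X : Fin L → Matrix (Fin L → Bool) (Fin L → Bool) ℝ)
    (hX : ∀ (j : Fin L) (f g : Fin L → Bool),
      X j f g = if g = Function.update f j (!(f j)) then 1 else 0)
    (A : Matrix (Fin L → Bool) (Fin L → Bool) ℝ) (hA : A = ∑ j, X j)
    (τ : ℝ) (c : Fin L → Bool) :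
    NormedSpace.exp (τ • A) c c = (Real.cosh τ) ^ L ∧
      NormedSpace.exp (τ • A) c (fun i => !(c i)) = (Real.sinh τ) ^ L := by
  have hXcomm : ∀ j k, Commute (X j) (X k) := X_commute X hX
  have hXsq : ∀ j, X j * X j = 1 := X_sq X hX
  set ch := Real.cosh τ with hch
  set sh := Real.sinh τ with hsh
  set M : Fin L → Matrix (Fin L → Bool) (Fin L → Bool) ℝ :=
    fun j => ch • 1 + sh • X j with hMdef
  have hM : ∀ (j : Fin L) (f g : Fin L → Bool),
      M j f g = (if g = f then ch else 0)
        + (if g = Function.update f j (!(f j)) then sh else 0) := by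
    intro j f g
    simp [hMdef, Matrix.add_apply, Matrix.smul_apply, Matrix.one_apply, hX, eq_comm,
      mul_ite]
  have hcommM : ∀ j k, Commute (M j) (M k) := by
    intro j k
    exact Commute.add_left ((Commute.one_left _).smul_left ch)
      (Commute.add_right (((Commute.one_right (X j)).smul_right ch).smul_left sh)
        (((hXcomm j k).smul_left sh).smul_right sh))
  have hA' : τ • A = ∑ j, τ • X j := by rw [hA, Finset.smul_sum]
  have pc : (↑(Finset.univ : Finset (Fin L)) : Set (Fin L)).Pairwise
      (Function.onFun Commute fun j => τ • X j) :=
    fun j _ k _ _ => ((hXcomm j k).smul_left τ).smul_right τ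
  have h1 := Matrix.exp_sum_of_commute (𝔸 := ℝ) Finset.univ (fun j => τ • X j) pc
  have h2 : ∀ j ∈ Finset.univ, NormedSpace.exp (τ • X j) = M j := fun j _ =>
    (exp_smul_of_sq_eq_one (X j) (hXsq j) τ)
  have h3 := Finset.noncommProd_congr rfl h2
    (fun u hu v hv huv => (pc.of_refl hu hv).exp)
  have hE : NormedSpace.exp (τ • A)
      = Finset.univ.noncommProd M (fun u _ v _ _ => hcommM u v) := by
    rw [hA']
    exact h1.trans h3
  have main : ∀ g : Fin L → Bool, NormedSpace.exp (τ • A) c g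
      = ∏ j, (if g j = c j then ch else sh) := by
    intro g
    rw [hE]
    rw [noncommProd_entry ch sh M hM hcommM Finset.univ c g]
    rw [if_pos (fun j hj => absurd (Finset.mem_univ j) hj)]
  constructor
  · rw [main c]
    simp [Finset.prod_const, Finset.card_univ]
  · rw [main (fun i => !(c i))]
    simp [Finset.prod_const, Finset.card_univ]
end

section
/- Let m be a natural number and λ : Fin m → ℝ. Define G : ℝ → ℝ by G(τ) = ∑_α log((1 + exp(2τ)·(λ α)²)/(1 + (λ α)²)). Then the second derivative of G at 0 equals ∑_α 4·(λ α)²/(1 + (λ α)²)², and this quantity is at most m. -/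
private lemma aux_inner (c τ : ℝ) (hc : 0 ≤ c) :
    HasDerivAt (fun t : ℝ => 1 + Real.exp (2 * t) * c)
      (2 * Real.exp (2 * τ) * c) τ := by
  have h : HasDerivAt (fun t : ℝ => Real.exp (2 * t)) (Real.exp (2 * τ) * 2) τ := by
    have := ((hasDerivAt_id τ).const_mul (2:ℝ)).exp
    simpa using this
  have := (h.mul_const c).const_add 1
  rw [show (2 * Real.exp (2 * τ) * c) = Real.exp (2 * τ) * 2 * c by ring]; exact this

private lemma aux_hd1 (c τ : ℝ) (hc : 0 ≤ c) :
    HasDerivAt (fun t : ℝ => Real.log (1 + Real.exp (2 * t) * c))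
      (2 * Real.exp (2 * τ) * c / (1 + Real.exp (2 * τ) * c)) τ := by
  have hpos : 0 < 1 + Real.exp (2 * τ) * c := by positivity
  exact (aux_inner c τ hc).log (ne_of_gt hpos)

private lemma aux_hd2 (c τ : ℝ) (hc : 0 ≤ c) :
    HasDerivAt (fun t : ℝ => 2 * Real.exp (2 * t) * c / (1 + Real.exp (2 * t) * c))
      (4 * Real.exp (2 * τ) * c / (1 + Real.exp (2 * τ) * c) ^ 2) τ := by
  have hpos : 0 < 1 + Real.exp (2 * τ) * c := by positivity
  have hnum : HasDerivAt (fun t : ℝ => 2 * Real.exp (2 * t) * c)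
      (4 * Real.exp (2 * τ) * c) τ := by
    have h : HasDerivAt (fun t : ℝ => Real.exp (2 * t)) (Real.exp (2 * τ) * 2) τ := by
      have := ((hasDerivAt_id τ).const_mul (2:ℝ)).exp
      simpa using this
    have := (h.const_mul 2).mul_const c
    rw [show (4 * Real.exp (2 * τ) * c) = 2 * (Real.exp (2 * τ) * 2) * c by ring]; exact this
  have := hnum.div (aux_inner c τ hc) (ne_of_gt hpos)
  rw [show (4 * Real.exp (2 * τ) * c / (1 + Real.exp (2 * τ) * c) ^ 2) = (4 * Real.exp (2 * τ) * c * (1 + Real.exp (2 * τ) * c) - 2 * Real.exp (2 * τ) * c * (2 * Real.exp (2 * τ) * c)) / (1 + Real.exp (2 * τ) * c) ^ 2 by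
    field_simp
    ring]
  exact this

/-- Even-parity particle-number variance bound for a BCS ground state: the
second derivative at `0` of
`G(τ) = ∑_α log((1 + e^{2τ}·λ_α²)/(1 + λ_α²))` equals
`∑_α 4·λ_α²/(1 + λ_α²)²`, which is at most `m`. -/
theorem even_parity_variance_bound
    (m : ℕ) (l : Fin m → ℝ)
    (G : ℝ → ℝ)
    (hG : ∀ τ : ℝ, G τ =
      ∑ α, Real.log ((1 + Real.exp (2 * τ) * (l α) ^ 2) / (1 + (l α) ^ 2))) :
    iteratedDeriv 2 G 0 = ∑ α, 4 * (l α) ^ 2 / (1 + (l α) ^ 2) ^ 2 ∧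
      (∑ α, 4 * (l α) ^ 2 / (1 + (l α) ^ 2) ^ 2) ≤ (m : ℝ) := by
  have hGfun : G = fun τ => ∑ α, Real.log
      ((1 + Real.exp (2 * τ) * (l α) ^ 2) / (1 + (l α) ^ 2)) := funext hG
  set D1 : ℝ → ℝ := fun τ => ∑ α,
      2 * Real.exp (2 * τ) * (l α) ^ 2 / (1 + Real.exp (2 * τ) * (l α) ^ 2) with hD1
  have hderivG : ∀ τ : ℝ, HasDerivAt G (D1 τ) τ := by
    intro τ
    rw [hGfun]
    apply HasDerivAt.fun_sum
    intro α _
    have hc : (0:ℝ) ≤ (l α) ^ 2 := sq_nonneg _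
    have heq : (fun t : ℝ => Real.log ((1 + Real.exp (2 * t) * (l α) ^ 2) / (1 + (l α) ^ 2)))
        = fun t : ℝ => Real.log (1 + Real.exp (2 * t) * (l α) ^ 2)
            - Real.log (1 + (l α) ^ 2) := by
      funext t
      exact Real.log_div (by positivity) (by positivity)
    rw [heq]
    exact (aux_hd1 _ τ hc).sub_const _
  have hderivD1 : HasDerivAt D1
      (∑ α, 4 * (l α) ^ 2 / (1 + (l α) ^ 2) ^ 2) 0 := by
    have := HasDerivAt.fun_sum (fun α (_ : α ∈ Finset.univ) =>
      aux_hd2 ((l α) ^ 2) 0 (sq_nonneg _))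
    simpa using this
  constructor
  · have h1 : deriv G = D1 := funext fun τ => (hderivG τ).deriv
    have h2 : iteratedDeriv 2 G 0 = deriv (deriv G) 0 := by
      simp [iteratedDeriv_succ, iteratedDeriv_one]
    rw [h2, h1]
    exact hderivD1.deriv
  · calc (∑ α, 4 * (l α) ^ 2 / (1 + (l α) ^ 2) ^ 2) ≤ ∑ _α : Fin m, (1:ℝ) := by
          apply Finset.sum_le_sum
          intro α _
          rw [div_le_one (by positivity)]
          nlinarith [sq_nonneg (1 - (l α) ^ 2)]
    _ = m := by simp
end

section
/- Let m be a natural number and λ, w : Fin m → ℝ with w α ≥ 0 for all α and ∑_α (w α)/(1 + (λ α)²) = 1. Define Q : ℝ → ℝ by Q(τ) = ∑_α (w α)/(1 + exp(2τ)·(λ α)²). Then the second derivative of Q at 0 equals ∑_α w α·(8·(λ α)⁴/(1 + (λ α)²)³ − 4·(λ α)²/(1 + (λ α)²)²), and this quantity is at most 8. -/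
open Real

lemma aux_pos (c τ : ℝ) (hc : 0 ≤ c) : 0 < 1 + Real.exp (2*τ) * c := by
  positivity

lemma aux_d1 (w c : ℝ) (hc : 0 ≤ c) (τ : ℝ) :
    HasDerivAt (fun τ => w / (1 + Real.exp (2*τ) * c))
      (-(2*w*c*Real.exp (2*τ)) / (1 + Real.exp (2*τ) * c)^2) τ := by
  have he : HasDerivAt (fun τ : ℝ => Real.exp (2*τ)) (Real.exp (2*τ) * 2) τ :=
    by simpa using ((hasDerivAt_id τ).const_mul 2).exp
  have hden : HasDerivAt (fun τ : ℝ => 1 + Real.exp (2*τ) * c)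
      (Real.exp (2*τ) * 2 * c) τ := (he.mul_const c).const_add 1
  have hne : (1 + Real.exp (2*τ) * c) ≠ 0 := (aux_pos c τ hc).ne'
  have := (hasDerivAt_const τ w).fun_div hden hne
  refine this.congr_deriv ?_
  rw [div_eq_div_iff (by positivity) (by positivity)]
  ring

lemma aux_d2 (w c : ℝ) (hc : 0 ≤ c) (τ : ℝ) :
    HasDerivAt (fun τ => -(2*w*c*Real.exp (2*τ)) / (1 + Real.exp (2*τ) * c)^2)
      (-(4*w*c*Real.exp (2*τ)) * (1 - Real.exp (2*τ)*c) / (1 + Real.exp (2*τ) * c)^3) τ := by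
  have he : HasDerivAt (fun τ : ℝ => Real.exp (2*τ)) (Real.exp (2*τ) * 2) τ :=
    by simpa using ((hasDerivAt_id τ).const_mul 2).exp
  have hnum : HasDerivAt (fun τ : ℝ => -(2*w*c*Real.exp (2*τ)))
      (-(2*w*c*(Real.exp (2*τ)*2))) τ := by
    simpa [mul_assoc] using ((he.const_mul (2*w*c)).fun_neg)
  have hden0 : HasDerivAt (fun τ : ℝ => 1 + Real.exp (2*τ) * c)
      (Real.exp (2*τ) * 2 * c) τ := (he.mul_const c).const_add 1
  have hden : HasDerivAt (fun τ : ℝ => (1 + Real.exp (2*τ) * c)^2)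
      (2 * (1 + Real.exp (2*τ) * c) * (Real.exp (2*τ) * 2 * c)) τ := by
    simpa using hden0.fun_pow 2
  have hpos := aux_pos c τ hc
  have hne : ((1 + Real.exp (2*τ) * c)^2) ≠ 0 := by positivity
  have := hnum.fun_div hden hne
  refine this.congr_deriv ?_
  have h1 : (1 + Real.exp (2*τ) * c) ≠ 0 := hpos.ne'
  rw [div_eq_div_iff (by positivity) (by positivity)]
  ring

/-- Odd-parity key estimate: with nonnegative weights `w` normalized so that
`∑_α w_α/(1 + λ_α²) = 1`, the second derivative at `0` of
`Q(τ) = ∑_α w_α/(1 + e^{2τ}·λ_α²)` equals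
`∑_α w_α·(8·λ_α⁴/(1 + λ_α²)³ − 4·λ_α²/(1 + λ_α²)²)`, which is at most `8`. -/
theorem odd_parity_Q_second_deriv_bound
    (m : ℕ) (l w : Fin m → ℝ)
    (hw : ∀ α, 0 ≤ w α)
    (hnorm : ∑ α, w α / (1 + (l α) ^ 2) = 1)
    (Q : ℝ → ℝ)
    (hQ : ∀ τ : ℝ, Q τ = ∑ α, w α / (1 + Real.exp (2 * τ) * (l α) ^ 2)) :
    iteratedDeriv 2 Q 0 =
        ∑ α, w α * (8 * (l α) ^ 4 / (1 + (l α) ^ 2) ^ 3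
          - 4 * (l α) ^ 2 / (1 + (l α) ^ 2) ^ 2) ∧
      (∑ α, w α * (8 * (l α) ^ 4 / (1 + (l α) ^ 2) ^ 3
          - 4 * (l α) ^ 2 / (1 + (l α) ^ 2) ^ 2)) ≤ 8 := by
  constructor
  · -- derivative computation
    have hQfun : Q = fun τ => ∑ α, w α / (1 + Real.exp (2 * τ) * (l α) ^ 2) :=
      funext hQ
    have hd1 : deriv Q = fun τ =>
        ∑ α, -(2 * w α * (l α)^2 * Real.exp (2*τ)) / (1 + Real.exp (2*τ) * (l α)^2)^2 := by
      funext τ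
      rw [hQfun]
      exact (HasDerivAt.fun_sum (fun α _ => aux_d1 (w α) ((l α)^2) (sq_nonneg _) τ)).deriv
    have hd2 : deriv (deriv Q) 0 =
        ∑ α, -(4 * w α * (l α)^2 * Real.exp (2*(0:ℝ))) * (1 - Real.exp (2*(0:ℝ)) * (l α)^2)
          / (1 + Real.exp (2*(0:ℝ)) * (l α)^2)^3 := by
      rw [hd1]
      exact (HasDerivAt.fun_sum (fun α _ => aux_d2 (w α) ((l α)^2) (sq_nonneg _) 0)).deriv
    rw [iteratedDeriv_succ, iteratedDeriv_one, hd2]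
    refine Finset.sum_congr rfl fun α _ => ?_
    have h1 : (1 + (l α)^2) ≠ 0 := by positivity
    simp only [mul_zero, Real.exp_zero, one_mul]
    field_simp
    ring
  · -- bound
    calc ∑ α, w α * (8 * (l α) ^ 4 / (1 + (l α) ^ 2) ^ 3
          - 4 * (l α) ^ 2 / (1 + (l α) ^ 2) ^ 2)
        ≤ ∑ α, 8 * (w α / (1 + (l α) ^ 2)) := by
          refine Finset.sum_le_sum fun α _ => ?_
          have hc : (0:ℝ) < 1 + (l α)^2 := by positivity
          have key : 8 * (l α) ^ 4 / (1 + (l α) ^ 2) ^ 3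
              - 4 * (l α) ^ 2 / (1 + (l α) ^ 2) ^ 2 ≤ 8 / (1 + (l α)^2) := by
            have heq : 8 * (l α) ^ 4 / (1 + (l α) ^ 2) ^ 3
                - 4 * (l α) ^ 2 / (1 + (l α) ^ 2) ^ 2
                = (4 * (l α)^4 - 4 * (l α)^2) / (1 + (l α)^2)^3 := by
              field_simp
              ring
            rw [heq, div_le_div_iff₀ (by positivity) hc]
            nlinarith [sq_nonneg (l α), sq_nonneg ((l α)^2), sq_nonneg ((l α)^2 + 1)]
          calc w α * (8 * (l α) ^ 4 / (1 + (l α) ^ 2) ^ 3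
                - 4 * (l α) ^ 2 / (1 + (l α) ^ 2) ^ 2)
              ≤ w α * (8 / (1 + (l α)^2)) := mul_le_mul_of_nonneg_left key (hw α)
            _ = 8 * (w α / (1 + (l α) ^ 2)) := by ring
      _ = 8 := by rw [← Finset.mul_sum, hnorm, mul_one]
end

section
/- Let m be a natural number and λ, w : Fin m → ℝ with w α ≥ 0 for all α and ∑_α (w α)/(1 + (λ α)²) = 1. Then ∑_α 4·(λ α)²/(1 + (λ α)²)² + ∑_α w α·(8·(λ α)⁴/(1 + (λ α)²)³ − 4·(λ α)²/(1 + (λ α)²)²) − (∑_α 2·(w α)·(λ α)²/(1 + (λ α)²)²)² ≤ m + 8. -/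
/-- Odd-parity particle-number variance bound
`F''_{2,−}(0) = F''_{2,+}(0) + Q''(0) − (Q'(0))² ≤ m + 8`: with nonnegative
weights `w` normalized so that `∑_α w_α/(1 + λ_α²) = 1`, the combination of
second-derivative terms is at most `m + 8`. -/
theorem odd_parity_variance_bound
    (m : ℕ) (l w : Fin m → ℝ)
    (hw : ∀ α, 0 ≤ w α)
    (hnorm : ∑ α, w α / (1 + (l α) ^ 2) = 1) :
    (∑ α, 4 * (l α) ^ 2 / (1 + (l α) ^ 2) ^ 2)
        + (∑ α, w α * (8 * (l α) ^ 4 / (1 + (l α) ^ 2) ^ 3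
            - 4 * (l α) ^ 2 / (1 + (l α) ^ 2) ^ 2))
        - (∑ α, 2 * w α * (l α) ^ 2 / (1 + (l α) ^ 2) ^ 2) ^ 2
      ≤ (m : ℝ) + 8 := by
  have hs1 : (∑ α, 4 * (l α) ^ 2 / (1 + (l α) ^ 2) ^ 2) ≤ (m : ℝ) := by
    calc (∑ α, 4 * (l α) ^ 2 / (1 + (l α) ^ 2) ^ 2)
        ≤ ∑ _α : Fin m, (1 : ℝ) := by
          apply Finset.sum_le_sum
          intro α _
          rw [div_le_one (by positivity)]
          nlinarith [sq_nonneg (1 - (l α) ^ 2)]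
      _ = (m : ℝ) := by simp
  have hs2 : (∑ α, w α * (8 * (l α) ^ 4 / (1 + (l α) ^ 2) ^ 3
      - 4 * (l α) ^ 2 / (1 + (l α) ^ 2) ^ 2)) ≤ 8 := by
    calc (∑ α, w α * (8 * (l α) ^ 4 / (1 + (l α) ^ 2) ^ 3
          - 4 * (l α) ^ 2 / (1 + (l α) ^ 2) ^ 2))
        ≤ ∑ α, 8 * (w α / (1 + (l α) ^ 2)) := by
          apply Finset.sum_le_sum
          intro α _
          have hx : (0:ℝ) < 1 + (l α) ^ 2 := by positivity
          have h1 : 8 * (l α) ^ 4 / (1 + (l α) ^ 2) ^ 3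
              - 4 * (l α) ^ 2 / (1 + (l α) ^ 2) ^ 2 ≤ 8 / (1 + (l α) ^ 2) := by
            rw [div_sub_div _ _ (by positivity) (by positivity),
              div_le_div_iff₀ (by positivity) hx]
            nlinarith [sq_nonneg (l α), sq_nonneg ((l α) ^ 2), pow_pos hx 3]
          calc w α * (8 * (l α) ^ 4 / (1 + (l α) ^ 2) ^ 3
              - 4 * (l α) ^ 2 / (1 + (l α) ^ 2) ^ 2)
              ≤ w α * (8 / (1 + (l α) ^ 2)) :=
                mul_le_mul_of_nonneg_left h1 (hw α)
            _ = 8 * (w α / (1 + (l α) ^ 2)) := by ring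
      _ = 8 := by rw [← Finset.mul_sum, hnorm, mul_one]
  have hsq : (0:ℝ) ≤ (∑ α, 2 * w α * (l α) ^ 2 / (1 + (l α) ^ 2) ^ 2) ^ 2 :=
    sq_nonneg _
  linarith
end
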